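/- Let U be a semiprime ideal of R, Γ a linearly ordered abelian group, and suppose R is a Σ_U-zip ring where Σ is trivial (untwisted case). Then the Hahn series ring R((Γ)) is a Σ_{U((Γ))}-zip ring, where U((Γ)) is the set of Hahn series with all coefficients in U. -/

import Mathlib

/-- The quotient `(U : X) = {r | x·r ∈ U for all x ∈ X}`. -/
def setQuot {S : Type*} [Ring S] (U X : Set S) : Set S :=
  {r : S | ∀ x ∈ X, x * r ∈ U}

/-- `S` is `Σ_U`-zip: for any subset `X ⊄ U` with `(U : X) = U` there is a
finite subset `Y ⊆ X` with `(U : Y) = U`. -/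
def IsSigmaZip (S : Type*) [Ring S] (U : Set S) : Prop :=
  ∀ X : Set S, ¬ X ⊆ U → setQuot U X = U →
    ∃ Y : Finset S, ↑Y ⊆ X ∧ setQuot U (↑Y : Set S) = U

/-- A two-sided ideal (as a subset). -/
def IsTwoSidedIdeal {S : Type*} [Ring S] (I : Set S) : Prop :=
  0 ∈ I ∧ (∀ a ∈ I, ∀ b ∈ I, a + b ∈ I) ∧ (∀ a ∈ I, -a ∈ I) ∧
    (∀ a ∈ I, ∀ r : S, a * r ∈ I) ∧ ∀ a ∈ I, ∀ r : S, r * a ∈ I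

/-- `U((Γ))`: Hahn series with all coefficients in `U`. -/
def hahnSeriesOver {R : Type*} [Ring R] (Γ : Type*) [AddCommGroup Γ] [LinearOrder Γ]
    [IsOrderedAddMonoid Γ] (U : Set R) : Set (HahnSeries Γ R) :=
  {f | ∀ γ : Γ, f.coeff γ ∈ U}

section aux

open Pointwise

lemma aux_sum_sort {M : Type*} [AddCommMonoid M] {α : Type*} [LinearOrder α]
    (A : Finset α) (F : α → M) :
    ((A.sort (· ≤ ·)).map F).sum = ∑ a ∈ A, F a := by
  rw [Finset.sum_eq_multiset_sum, ← Finset.sort_eq (s := A) (r := (· ≤ ·)), Multiset.map_coe, Multiset.sum_coe]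

variable {R : Type*} [Ring R] {U : Set R}

lemma aux_list_sum_mem (hIdeal : IsTwoSidedIdeal U) :
    ∀ l : List R, (∀ x ∈ l, x ∈ U) → l.sum ∈ U := by
  intro l
  induction l with
  | nil => intro _; simpa using hIdeal.1
  | cons a l ih =>
    intro h
    rw [List.sum_cons]
    exact hIdeal.2.1 _ (h a List.mem_cons_self) _
      (ih fun x hx => h x (List.mem_cons_of_mem _ hx))

lemma aux_comm (hIdeal : IsTwoSidedIdeal U)
    (hSemiprime : ∀ a : R, ∀ n : ℕ, 0 < n → a ^ n ∈ U → a ∈ U)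
    {a b : R} (h : a * b ∈ U) : b * a ∈ U := by
  apply hSemiprime _ 2 (by norm_num)
  have heq : (b * a) ^ 2 = b * (a * b * a) := by noncomm_ring
  rw [heq]
  exact hIdeal.2.2.2.2 _ (hIdeal.2.2.2.1 _ h a) b

/-- The key semiprime lemma: if a sum `∑ aᵢ bᵢ ∈ U` and all "cross" products
`aᵢ bⱼ ∈ U` for `i < j`, then each `aᵢ bᵢ ∈ U`. -/
lemma aux_key (hIdeal : IsTwoSidedIdeal U)
    (hSemiprime : ∀ a : R, ∀ n : ℕ, 0 < n → a ^ n ∈ U → a ∈ U) :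
    ∀ l : List (R × R), (l.map (fun p => p.1 * p.2)).sum ∈ U →
      l.Pairwise (fun p q => p.1 * q.2 ∈ U) → ∀ p ∈ l, p.1 * p.2 ∈ U := by
  intro l
  induction l with
  | nil => simp
  | cons a l ih =>
    intro hsum hpw p hp
    rw [List.map_cons, List.sum_cons] at hsum
    obtain ⟨ha, hl⟩ := List.pairwise_cons.mp hpw
    have hrest : (l.map fun p => (p.1 * p.2) * a.1).sum ∈ U := by
      apply aux_list_sum_mem hIdeal
      intro x hx
      simp only [List.mem_map] at hx
      obtain ⟨q, hq, rfl⟩ := hx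
      have h1 : q.2 * a.1 ∈ U := aux_comm hIdeal hSemiprime (ha q hq)
      have h2 : q.1 * (q.2 * a.1) ∈ U := hIdeal.2.2.2.2 _ h1 q.1
      rwa [← mul_assoc] at h2
    have hS : (a.1 * a.2 + (l.map fun p => p.1 * p.2).sum) * a.1 ∈ U :=
      hIdeal.2.2.2.1 _ hsum _
    have haaa : a.1 * a.2 * a.1 ∈ U := by
      have heq : a.1 * a.2 * a.1 =
          (a.1 * a.2 + (l.map fun p => p.1 * p.2).sum) * a.1 +
            -(l.map fun p => (p.1 * p.2) * a.1).sum := by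
        rw [List.sum_map_mul_right, add_mul]
        abel
      rw [heq]
      exact hIdeal.2.1 _ hS _ (hIdeal.2.2.1 _ hrest)
    have haa : a.1 * a.2 ∈ U := by
      apply hSemiprime _ 2 (by norm_num)
      have heq : (a.1 * a.2) ^ 2 = (a.1 * a.2 * a.1) * a.2 := by noncomm_ring
      rw [heq]
      exact hIdeal.2.2.2.1 _ haaa a.2
    rcases List.mem_cons.mp hp with rfl | hp'
    · exact haa
    · apply ih ?_ hl p hp'
      have heq : (l.map fun p => p.1 * p.2).sum =
          (a.1 * a.2 + (l.map fun p => p.1 * p.2).sum) + -(a.1 * a.2) := by abel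
      rw [heq]
      exact hIdeal.2.1 _ hsum _ (hIdeal.2.2.1 _ haa)

variable {Γ : Type*} [AddCommGroup Γ] [LinearOrder Γ] [IsOrderedAddMonoid Γ]

lemma aux_mul_mem_hahn (hIdeal : IsTwoSidedIdeal U)
    {f : HahnSeries Γ R} (hf : f ∈ hahnSeriesOver Γ U) (x : HahnSeries Γ R) :
    x * f ∈ hahnSeriesOver Γ U := by
  intro γ
  rw [HahnSeries.coeff_mul]
  refine Finset.sum_induction _ (· ∈ U) (fun a b ha hb => hIdeal.2.1 a ha b hb) hIdeal.1 ?_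
  intro p _
  exact hIdeal.2.2.2.2 _ (hf p.2) (x.coeff p.1)

/-- If `U` is semiprime and `y * f` has all coefficients in `U`, then all
products of a coefficient of `y` with a coefficient of `f` lie in `U`. -/
lemma aux_coeffwise (hIdeal : IsTwoSidedIdeal U)
    (hSemiprime : ∀ a : R, ∀ n : ℕ, 0 < n → a ^ n ∈ U → a ∈ U)
    (y f : HahnSeries Γ R) (h : ∀ γ, (y * f).coeff γ ∈ U) :
    ∀ α β : Γ, y.coeff α * f.coeff β ∈ U := by
  by_contra hcon
  push_neg at hcon
  set T : Set Γ := {γ | ∃ α β, α + β = γ ∧ y.coeff α * f.coeff β ∉ U} with hTdef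
  have hTne : T.Nonempty := by
    obtain ⟨α, β, hαβ⟩ := hcon
    exact ⟨α + β, α, β, rfl, hαβ⟩
  have hTsub : T ⊆ y.support + f.support := by
    rintro γ ⟨α, β, rfl, hmem⟩
    refine Set.mem_add.mpr ⟨α, ?_, β, ?_, rfl⟩
    · by_contra h0
      rw [HahnSeries.mem_support, not_not] at h0
      exact hmem (by rw [h0, zero_mul]; exact hIdeal.1)
    · by_contra h0
      rw [HahnSeries.mem_support, not_not] at h0
      exact hmem (by rw [h0, mul_zero]; exact hIdeal.1)
  have hWF : T.IsWF := ((y.isPWO_support.add f.isPWO_support).isWF).mono hTsub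
  obtain ⟨α, β, hsum, hnot⟩ := hWF.min_mem hTne
  set γ0 : Γ := hWF.min hTne with hγ0def
  have hmin : ∀ γ' < γ0, ∀ a b : Γ, a + b = γ' → y.coeff a * f.coeff b ∈ U := by
    intro γ' hlt a b hab
    by_contra hnm
    exact hWF.not_lt_min hTne ⟨a, b, hab, hnm⟩ hlt
  apply hnot
  by_cases hα : α ∈ y.support
  · by_cases hβ : β ∈ f.support
    · -- main case
      set s := Finset.addAntidiagonal y.isPWO_support f.isPWO_support γ0 with hsdef
      set A := s.image Prod.fst with hAdef
      set L := A.sort (· ≤ ·) with hLdef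
      set g : Γ → R × R := fun a => (y.coeff a, f.coeff (γ0 - a)) with hgdef
      set l := L.map g with hldef
      have hsum0 : (l.map (fun p => p.1 * p.2)).sum ∈ U := by
        have h1 : (l.map (fun p => p.1 * p.2)).sum =
            ∑ a ∈ A, y.coeff a * f.coeff (γ0 - a) := by
          rw [hldef, List.map_map, hLdef]
          exact aux_sum_sort A ((fun p : R × R => p.1 * p.2) ∘ g)
        have h3 : ∑ a ∈ A, y.coeff a * f.coeff (γ0 - a)
            = ∑ p ∈ s, y.coeff p.1 * f.coeff p.2 := by
          rw [hAdef, Finset.sum_image]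
          · apply Finset.sum_congr rfl
            intro p hp
            obtain ⟨_, _, hpq⟩ := Finset.mem_addAntidiagonal.mp hp
            have : p.2 = γ0 - p.1 := by
              rw [← hpq]; abel
            rw [this]
          · intro p hp q hq hpq
            obtain ⟨_, _, hp2⟩ := Finset.mem_addAntidiagonal.mp hp
            obtain ⟨_, _, hq2⟩ := Finset.mem_addAntidiagonal.mp hq
            have h4 : p.1 + p.2 = p.1 + q.2 := by rw [hp2, hpq, hq2]
            exact Prod.ext hpq (add_left_cancel h4)
        rw [h1, h3]
        exact h γ0
      have hpw : l.Pairwise (fun p q => p.1 * q.2 ∈ U) := by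
        rw [hldef, List.pairwise_map]
        refine List.Pairwise.imp ?_ (Finset.sortedLT_sort A).pairwise
        intro a b hab
        have hlt : a + (γ0 - b) < γ0 := by
          have h1 : a + (γ0 - b) < b + (γ0 - b) := add_lt_add_left hab _
          have h2 : b + (γ0 - b) = γ0 := by abel
          rwa [h2] at h1
        exact hmin _ hlt a (γ0 - b) rfl
      have hall := aux_key hIdeal hSemiprime l hsum0 hpw
      have hαA : α ∈ A :=
        Finset.mem_image.mpr ⟨(α, β), Finset.mem_addAntidiagonal.mpr ⟨hα, hβ, hsum⟩, rfl⟩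
      have hαL : α ∈ L := (Finset.mem_sort _).mpr hαA
      have hmem : g α ∈ l := List.mem_map.mpr ⟨α, hαL, rfl⟩
      have := hall _ hmem
      have hβeq : β = γ0 - α := by rw [← hsum]; abel
      rw [hβeq]
      exact this
    · rw [HahnSeries.mem_support, not_not] at hβ
      rw [hβ, mul_zero]; exact hIdeal.1
  · rw [HahnSeries.mem_support, not_not] at hα
    rw [hα, zero_mul]; exact hIdeal.1

end aux

/-- If `U` is a semiprime ideal of `R` and `R` is `Σ_U`-zip, then the Hahn
series ring `R((Γ))` is `Σ_{U((Γ))}`-zip. -/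
theorem sigmaZip_hahnSeries_of_sigmaZip {R : Type*} [Ring R] (Γ : Type*)
    [AddCommGroup Γ] [LinearOrder Γ] [IsOrderedAddMonoid Γ] (U : Set R)
    (hIdeal : IsTwoSidedIdeal U)
    (hSemiprime : ∀ a : R, ∀ n : ℕ, 0 < n → a ^ n ∈ U → a ∈ U)
    (hZip : IsSigmaZip R U) :
    IsSigmaZip (HahnSeries Γ R) (hahnSeriesOver Γ U) := by
  intro X hX hQ
  set Xstar : Set R := {r | ∃ x ∈ X, ∃ γ : Γ, x.coeff γ = r} with hXstardef
  have hXstar_not : ¬ Xstar ⊆ U := by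
    obtain ⟨x, hxX, hxV⟩ := Set.not_subset.mp hX
    simp only [hahnSeriesOver, Set.mem_setOf_eq, not_forall] at hxV
    obtain ⟨γ, hγ⟩ := hxV
    intro hsub
    exact hγ (hsub ⟨x, hxX, γ, rfl⟩)
  have hXstar_quot : setQuot U Xstar = U := by
    ext r
    constructor
    · intro hr
      have hsingle : (HahnSeries.single (0 : Γ) r) ∈ setQuot (hahnSeriesOver Γ U) X := by
        intro x hx γ
        rw [HahnSeries.coeff_mul_single_zero]
        exact hr _ ⟨x, hx, γ, rfl⟩
      rw [hQ] at hsingle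
      have := hsingle 0
      rwa [HahnSeries.coeff_single_same] at this
    · intro hr a _
      exact hIdeal.2.2.2.2 r hr a
  obtain ⟨Ystar, hYsub, hYquot⟩ := hZip Xstar hXstar_not hXstar_quot
  have hwit : ∀ a : R, a ∈ Ystar → ∃ x ∈ X, ∃ γ : Γ, x.coeff γ = a := by
    intro a ha
    exact hYsub ha
  classical
  set Y : Finset (HahnSeries Γ R) :=
    Ystar.attach.image (fun a => (hwit a.1 a.2).choose) with hYdef
  refine ⟨Y, ?_, ?_⟩
  · intro x hx
    simp only [hYdef, Finset.coe_image, Set.mem_image, Finset.mem_coe,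
      Finset.mem_attach, true_and] at hx
    obtain ⟨a, rfl⟩ := hx
    exact (hwit a.1 a.2).choose_spec.1
  · ext f
    constructor
    · intro hf
      intro δ
      rw [← hYquot]
      intro a ha
      have haY : a ∈ Ystar := ha
      set x := (hwit a haY).choose with hxdef
      obtain ⟨hxX, γa, hγa⟩ := (hwit a haY).choose_spec
      have hxY : x ∈ (Y : Set (HahnSeries Γ R)) := by
        simp only [hYdef, Finset.coe_image, Set.mem_image, Finset.mem_coe, Finset.mem_attach,
          true_and]
        exact ⟨⟨a, haY⟩, rfl⟩
      have hxf : x * f ∈ hahnSeriesOver Γ U := hf x hxY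
      have := aux_coeffwise hIdeal hSemiprime x f hxf γa δ
      rwa [hγa] at this
    · intro hf x hx
      exact aux_mul_mem_hahn hIdeal hf x
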